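/- arXiv:math/0612404 — 2 statements merged into one kernel-verified Lean document; each statement's English description precedes it below -/
import Mathlib

section
/- Let A be a finite affine hyperplane arrangement in ℂⁿ and let U be a small open convex set with G = Min(U) ∈ L(A). Then the pair (U, U ∩ Σ(A)) is homeomorphic to the pair (ℂⁿ, Σ(A_G)), where A_G := {H ∈ A : G ⊆ H} is the central subarrangement of hyperplanes containing G; in particular U − Σ(A) is homeomorphic to the complement M(A_G) of a central arrangement. -/
open CategoryTheory

abbrev Vc (n : ℕ) := Fin n → ℂ

def IsHyperplane {n : ℕ} (H : AffineSubspace ℂ (Vc n)) : Prop :=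
  (H : Set (Vc n)).Nonempty ∧ Module.finrank ℂ H.direction + 1 = n

def arrSing {n : ℕ} (A : Finset (AffineSubspace ℂ (Vc n))) : Set (Vc n) :=
  ⋃ H ∈ A, (H : Set (Vc n))

noncomputable def interSub {n : ℕ} (s : Finset (AffineSubspace ℂ (Vc n))) :
    AffineSubspace ℂ (Vc n) :=
  sInf (s : Set (AffineSubspace ℂ (Vc n)))

/-- The augmented intersection poset `L̄(A)`: all nonempty intersections of
subfamilies of `A` (the empty subfamily giving the whole space `ℂⁿ = ⊤`). -/
def Lbar {n : ℕ} (A : Finset (AffineSubspace ℂ (Vc n))) : Set (AffineSubspace ℂ (Vc n)) :=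
  {G | (∃ s ⊆ A, G = interSub s) ∧ (G : Set (Vc n)).Nonempty}

/-- `U` is a small open convex set with minimum element `G = Min(U)`:
`U` is open and convex, `G` is the minimum of the set of elements of `L̄(A)`
meeting `U`, and a hyperplane of `A` meets `U` iff it contains `G`. -/
def IsSmallWith {n : ℕ} (A : Finset (AffineSubspace ℂ (Vc n))) (U : Set (Vc n))
    (G : AffineSubspace ℂ (Vc n)) : Prop :=
  IsOpen U ∧ Convex ℝ U ∧ G ∈ Lbar A ∧ ((G : Set (Vc n)) ∩ U).Nonempty ∧
    (∀ G' ∈ Lbar A, ((G' : Set (Vc n)) ∩ U).Nonempty → G ≤ G') ∧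
    (∀ H ∈ A, ((H : Set (Vc n)) ∩ U).Nonempty ↔ G ≤ H)

/-- `U` is a small open convex set with respect to the arrangement `A`. -/
def IsSmall {n : ℕ} (A : Finset (AffineSubspace ℂ (Vc n))) (U : Set (Vc n)) : Prop :=
  ∃ G, IsSmallWith A U G

/-- The central subarrangement `A_G` of hyperplanes of `A` containing `G`. -/
noncomputable def subArr {n : ℕ} (A : Finset (AffineSubspace ℂ (Vc n))) (G : AffineSubspace ℂ (Vc n)) :
    Finset (AffineSubspace ℂ (Vc n)) :=
  open Classical in A.filter (fun H => G ≤ H)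

/-- Let `U` be a small open convex set with `G = Min(U) ∈ L(A)`
(i.e. `G ≠ ℂⁿ`).  Then there is a homeomorphism `U ≃ ℂⁿ` carrying `U ∩ Σ(A)` onto
`Σ(A_G)`, where `A_G = {H ∈ A : G ⊆ H}`; in particular `U - Σ(A)` is homeomorphic to
the complement `M(A_G)` of the central arrangement `A_G`. -/
theorem stmt11 {n : ℕ} (A : Finset (AffineSubspace ℂ (Vc n)))
    (hA : ∀ H ∈ A, IsHyperplane H) (U : Set (Vc n)) (G : AffineSubspace ℂ (Vc n))
    (hU : IsSmallWith A U G) (hG : G ≠ ⊤) :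
    (∃ e : U ≃ₜ Vc n,
        (e '' {x : U | (x : Vc n) ∈ arrSing A}) = arrSing (subArr A G)) ∧
      Nonempty (↥(U \ arrSing A) ≃ₜ ↥(arrSing (subArr A G))ᶜ) := by
  obtain ⟨hUo, hUc, hGL, ⟨x₀, hx₀G, hx₀U⟩, hmin, hiff⟩ := hU
  -- translated set
  set V : Set (Vc n) := (fun v => x₀ + v) ⁻¹' U with hVdef
  have hVmem : ∀ v, v ∈ V ↔ x₀ + v ∈ U := fun v => Iff.rfl
  have hVo : IsOpen V := hUo.preimage (continuous_const.add continuous_id)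
  have hVc : Convex ℝ V := by
    intro a ha b hb s t hs ht hst
    have h := hUc ha hb hs ht hst
    show x₀ + (s • a + t • b) ∈ U
    have key : s • (x₀ + a) + t • (x₀ + b) = x₀ + (s • a + t • b) := by
      calc s • (x₀ + a) + t • (x₀ + b) = (s • x₀ + t • x₀) + (s • a + t • b) := by
            rw [smul_add, smul_add]; abel
        _ = x₀ + (s • a + t • b) := by rw [Convex.combo_self hst x₀]
    exact key ▸ h
  have h0V : (0 : Vc n) ∈ V := by simpa [hVmem] using hx₀U
  set γ : Vc n → ℝ := gauge V with hγdef
  have hγnn : ∀ v, 0 ≤ γ v := fun v => gauge_nonneg v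
  have hγlt : ∀ v ∈ V, γ v < 1 := fun v hv => gauge_lt_one_of_mem_of_isOpen hVo hv
  have hγmem : ∀ v, γ v < 1 → v ∈ V := fun v hv =>
    gauge_lt_one_subset_self hVc h0V (absorbent_nhds_zero (hVo.mem_nhds h0V)) hv
  have hγsmul : ∀ (c : ℝ), 0 ≤ c → ∀ v, γ (c • v) = c * γ v := fun c hc v =>
    gauge_smul_of_nonneg hc v
  have hγcont : Continuous γ := continuous_gauge hVc (hVo.mem_nhds h0V)
  have hxV : ∀ x, x ∈ U ↔ x - x₀ ∈ V := by
    intro x; rw [hVmem]; constructor <;> intro h <;> simpa using h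
  -- the radial maps
  set F : Vc n → Vc n := fun x => x₀ + (1 - γ (x - x₀))⁻¹ • (x - x₀) with hFdef
  set R : Vc n → Vc n := fun y => x₀ + (1 + γ (y - x₀))⁻¹ • (y - x₀) with hRdef
  have hFsub : ∀ x, F x - x₀ = (1 - γ (x - x₀))⁻¹ • (x - x₀) := by
    intro x; simp [hFdef]
  have hRsub : ∀ y, R y - x₀ = (1 + γ (y - x₀))⁻¹ • (y - x₀) := by
    intro y; simp [hRdef]
  have hFR : ∀ x ∈ U, R (F x) = x := by
    intro x hx
    set v := x - x₀ with hv
    have hg : γ v < 1 := hγlt v ((hxV x).1 hx)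
    have h1g : (0 : ℝ) < 1 - γ v := by linarith
    have hc : (0 : ℝ) ≤ (1 - γ v)⁻¹ := le_of_lt (inv_pos.2 h1g)
    have hγF : γ (F x - x₀) = (1 - γ v)⁻¹ * γ v := by
      rw [hFsub, ← hv, hγsmul _ hc]
    have hsc : (1 + γ (F x - x₀))⁻¹ * (1 - γ v)⁻¹ = 1 := by
      rw [hγF]; field_simp; ring
    have : R (F x) = x₀ + ((1 + γ (F x - x₀))⁻¹ * (1 - γ v)⁻¹) • v := by
      rw [hRdef]; simp only [hFsub, ← hv, smul_smul]
    rw [this, hsc, one_smul, hv]; abel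
  have hRF : ∀ y, F (R y) = y := by
    intro y
    set w := y - x₀ with hw
    have ht : (0 : ℝ) ≤ γ w := hγnn w
    have h1t : (0 : ℝ) < 1 + γ w := by linarith
    have hc : (0 : ℝ) ≤ (1 + γ w)⁻¹ := le_of_lt (inv_pos.2 h1t)
    have hγR : γ (R y - x₀) = (1 + γ w)⁻¹ * γ w := by
      rw [hRsub, ← hw, hγsmul _ hc]
    have hsc : (1 - γ (R y - x₀))⁻¹ * (1 + γ w)⁻¹ = 1 := by
      rw [hγR]
      have h2 : 1 - (1 + γ w)⁻¹ * γ w = (1 + γ w)⁻¹ := by field_simp; ring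
      rw [h2]; field_simp
    have : F (R y) = x₀ + ((1 - γ (R y - x₀))⁻¹ * (1 + γ w)⁻¹) • w := by
      rw [hFdef]; simp only [hRsub, ← hw, smul_smul]
    rw [this, hsc, one_smul, hw]; abel
  have hRU : ∀ y, R y ∈ U := by
    intro y
    set w := y - x₀ with hw
    have ht : (0 : ℝ) ≤ γ w := hγnn w
    have h1t : (0 : ℝ) < 1 + γ w := by linarith
    have hc : (0 : ℝ) ≤ (1 + γ w)⁻¹ := le_of_lt (inv_pos.2 h1t)
    have hγR : γ (R y - x₀) = (1 + γ w)⁻¹ * γ w := by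
      rw [hRsub, ← hw, hγsmul _ hc]
    have hlt : γ (R y - x₀) < 1 := by
      rw [hγR, inv_mul_eq_div, div_lt_one h1t]; linarith
    exact (hxV (R y)).2 (hγmem _ hlt)
  -- scaling preserves affine subspaces through x₀
  have hscale : ∀ (H : AffineSubspace ℂ (Vc n)), x₀ ∈ H → ∀ (c : ℝ), c ≠ 0 →
      ∀ x, (x₀ + c • (x - x₀) ∈ H ↔ x ∈ H) := by
    intro H hx₀H c hc x
    have haux : ∀ z : Vc n, z ∈ H ↔ z - x₀ ∈ H.direction := by
      intro z
      constructor
      · intro hz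
        simpa [vsub_eq_sub] using AffineSubspace.vsub_mem_direction hz hx₀H
      · intro hd
        have := AffineSubspace.vadd_mem_of_mem_direction (v := z - x₀) (by simpa using hd) hx₀H
        simpa [vadd_eq_add] using this
    rw [haux, haux x]
    have h1 : x₀ + c • (x - x₀) - x₀ = c • (x - x₀) := by abel
    rw [h1]
    constructor
    · intro h
      have := H.direction.smul_of_tower_mem c⁻¹ h
      rwa [inv_smul_smul₀ hc] at this
    · intro h
      exact H.direction.smul_of_tower_mem c h
  -- scaling preserves membership in the singular sets
  have hkey : ∀ x ∈ U, (F x ∈ arrSing (subArr A G) ↔ x ∈ arrSing A) := by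
    intro x hx
    have hg : γ (x - x₀) < 1 := hγlt _ ((hxV x).1 hx)
    have hcne : ((1 - γ (x - x₀))⁻¹ : ℝ) ≠ 0 := by
      have : (0 : ℝ) < 1 - γ (x - x₀) := by linarith
      positivity
    constructor
    · rintro hmem
      simp only [arrSing, Set.mem_iUnion] at hmem ⊢
      obtain ⟨H, hH, hxH⟩ := hmem
      simp only [subArr, Finset.mem_filter] at hH
      obtain ⟨hHA, hGH⟩ := hH
      have hx₀H : x₀ ∈ H := hGH hx₀G
      exact ⟨H, hHA, ((hscale H hx₀H _ hcne x).1 hxH)⟩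
    · rintro hmem
      simp only [arrSing, Set.mem_iUnion] at hmem ⊢
      obtain ⟨H, hH, hxH⟩ := hmem
      have hGH : G ≤ H := (hiff H hH).1 ⟨x, hxH, hx⟩
      have hx₀H : x₀ ∈ H := hGH hx₀G
      refine ⟨H, ?_, (hscale H hx₀H _ hcne x).2 hxH⟩
      simp only [subArr, Finset.mem_filter]
      exact ⟨hH, hGH⟩
  -- continuity
  have hFcont : Continuous fun x : U => F (x : Vc n) := by
    have h1 : Continuous fun x : U => (x : Vc n) - x₀ :=
      continuous_subtype_val.sub continuous_const
    have h2 : Continuous fun x : U => 1 - γ ((x : Vc n) - x₀) :=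
      continuous_const.sub (hγcont.comp h1)
    have h3 : Continuous fun x : U => (1 - γ ((x : Vc n) - x₀))⁻¹ := by
      refine h2.inv₀ fun x => ?_
      have : γ ((x : Vc n) - x₀) < 1 := hγlt _ ((hxV _).1 x.2)
      intro h; linarith [h]
    exact continuous_const.add (h3.smul h1)
  have hRcont : Continuous R := by
    have h1 : Continuous fun y : Vc n => y - x₀ := continuous_id.sub continuous_const
    have h2 : Continuous fun y : Vc n => 1 + γ (y - x₀) :=
      continuous_const.add (hγcont.comp h1)
    have h3 : Continuous fun y : Vc n => (1 + γ (y - x₀))⁻¹ := by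
      refine h2.inv₀ fun y => ?_
      have := hγnn (y - x₀); intro h; linarith [h]
    exact continuous_const.add (h3.smul h1)
  -- build the homeomorphism
  let e : U ≃ₜ Vc n :=
    { toFun := fun x => F (x : Vc n)
      invFun := fun y => ⟨R y, hRU y⟩
      left_inv := fun x => Subtype.ext (hFR x x.2)
      right_inv := hRF
      continuous_toFun := hFcont
      continuous_invFun := hRcont.subtype_mk _ }
  set S : Set U := {x : U | (x : Vc n) ∈ arrSing A} with hSdef
  have hIm : e '' S = arrSing (subArr A G) := by
    ext y
    constructor
    · rintro ⟨x, hxS, rfl⟩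
      exact (hkey x x.2).2 hxS
    · intro hy
      refine ⟨⟨R y, hRU y⟩, ?_, ?_⟩
      · show R y ∈ arrSing A
        have := (hkey (R y) (hRU y)).1 (by rwa [hRF])
        exact this
      · show F (R y) = y
        exact hRF y
  refine ⟨⟨e, hIm⟩, ?_⟩
  -- complements
  have h1 : ↥(U \ arrSing A) ≃ₜ ↥(Sᶜ : Set U) :=
    { toFun := fun x => ⟨⟨x.1, x.2.1⟩, x.2.2⟩
      invFun := fun x => ⟨x.1.1, x.1.2, x.2⟩
      left_inv := fun x => rfl
      right_inv := fun x => rfl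
      continuous_toFun := by
        refine Continuous.subtype_mk ?_ _
        exact continuous_subtype_val.subtype_mk _
      continuous_invFun := by
        exact (continuous_subtype_val.comp continuous_subtype_val).subtype_mk _ }
  have h2 : ↥(Sᶜ : Set U) ≃ₜ ↥(e '' Sᶜ) := e.image Sᶜ
  have hcompl : e '' Sᶜ = (arrSing (subArr A G))ᶜ := by
    rw [Set.image_compl_eq e.bijective, hIm]
  exact ⟨h1.trans (h2.trans (Homeomorph.setCongr hcompl))⟩
end

section
/- Let A be a finite affine hyperplane arrangement in ℂⁿ and U a small open convex set with Û = U − Σ(A). Then the inclusion Û ↪ M(A) induces an injection on fundamental groups, and moreover π_1(Û) is a retract of π_1(M(A)): there is a homomorphism π_1(M(A)) → π_1(Û) whose composition with the inclusion-induced map is the identity. -/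
open CategoryTheory

/-- The homomorphism on fundamental groups induced by a continuous map. -/
noncomputable def piOneMap {X Y : Type} [TopologicalSpace X] [TopologicalSpace Y]
    (f : C(X, Y)) (x : X) : FundamentalGroup X x →* FundamentalGroup Y (f x) :=
  Functor.mapEnd (X := (⟨x⟩ : FundamentalGroupoid X))
    (FundamentalGroupoid.fundamentalGroupoidFunctor.map
      (X := TopCat.of X) (Y := TopCat.of Y) (TopCat.ofHom f))

/-- The inclusion of `Û = U - Σ(A)` into `M(A) = ℂⁿ - Σ(A)`, as a continuous map. -/
def smallIncl {n : ℕ} (A : Finset (AffineSubspace ℂ (Vc n))) (U : Set (Vc n)) :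
    C(↥(U \ arrSing A), ↥(arrSing A)ᶜ) :=
  ⟨fun x => ⟨(x : Vc n), x.2.2⟩, by fun_prop⟩

open FundamentalGroupoid FundamentalGroupoidFunctor in
lemma retract_aux12 {X Y : Type} [TopologicalSpace X] [TopologicalSpace Y]
    (i : C(X, Y)) (r : C(Y, X))
    (H : ContinuousMap.Homotopy (ContinuousMap.id X) (r.comp i)) (x₀ : X) :
    ∃ ρ : FundamentalGroup Y (i x₀) →* FundamentalGroup X x₀,
      ρ.comp (piOneMap i x₀) = MonoidHom.id _ := by
  let η := FundamentalGroupoidFunctor.homotopicMapsNatIso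
    (f := ContinuousMap.id X) (g := r.comp i) H
  let γ : (⟨x₀⟩ : FundamentalGroupoid X) ⟶ ⟨r (i x₀)⟩ := η.app ⟨x₀⟩
  let e : (⟨x₀⟩ : FundamentalGroupoid X) ≅ ⟨r (i x₀)⟩ := Groupoid.isoEquivHom _ _ |>.symm γ
  refine ⟨(e.symm.conj).toMonoidHom.comp (piOneMap r (i x₀)), ?_⟩
  refine MonoidHom.ext fun a => ?_
  show e.symm.conj ((piOneMap r (i x₀)) ((piOneMap i x₀) a)) = a
  have hnat := η.naturality (X := ⟨x₀⟩) (Y := ⟨x₀⟩) a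
  have hZ : (piOneMap r (i x₀)) ((piOneMap i x₀) a)
      = (FundamentalGroupoid.map (r.comp i)).map a := by
    have hZ' : ∀ b : FundamentalGroup X x₀, (piOneMap r (i x₀)) ((piOneMap i x₀) b)
        = (FundamentalGroupoid.map (r.comp i)).map b := by
      rintro ⟨p⟩; rfl
    exact hZ' a
  have h1 : (FundamentalGroupoid.map (ContinuousMap.id X)).map a = a := by
    have h1' : ∀ b : FundamentalGroup X x₀,
        (FundamentalGroupoid.map (ContinuousMap.id X)).map b = b := by
      rintro ⟨p⟩; rfl
    exact h1' a
  rw [h1] at hnat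
  have hγ : (FundamentalGroupoid.map (r.comp i)).map a = Groupoid.inv γ ≫ (a ≫ γ) := by
    rw [Groupoid.inv_eq_inv]
    exact (IsIso.eq_inv_comp γ).mpr hnat.symm
  rw [Iso.conj_apply, hZ, hγ]
  have he : e.hom = γ := rfl
  have he2 : e.inv = Groupoid.inv γ := rfl
  simp only [Iso.symm_inv, Iso.symm_hom, he, he2]
  simp [Groupoid.inv_eq_inv]

/-- **Statement 12.** Let `U` be a small open convex set for the affine arrangement `A`
and `Û = U - Σ(A)`.  Then the inclusion `Û ↪ M(A)` induces an injection on fundamental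
groups, and `π₁(Û)` is a retract of `π₁(M(A))`: there is a homomorphism
`π₁(M(A)) → π₁(Û)` whose composition with the inclusion-induced map is the identity. -/
theorem stmt12 {n : ℕ} (A : Finset (AffineSubspace ℂ (Vc n)))
    (hA : ∀ H ∈ A, IsHyperplane H) (U : Set (Vc n)) (hU : IsSmall A U)
    (x₀ : ↥(U \ arrSing A)) :
    Function.Injective (piOneMap (smallIncl A U) x₀) ∧
      ∃ r : FundamentalGroup (↥(arrSing A)ᶜ) (smallIncl A U x₀) →*
          FundamentalGroup (↥(U \ arrSing A)) x₀,
        r.comp (piOneMap (smallIncl A U) x₀) = MonoidHom.id _ := by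
  classical
  obtain ⟨G, hUopen, hUconv, hG, ⟨p, hpG, hpU⟩, hmin, hiffAll⟩ := hU
  have hiff : ∀ H ∈ A, ((H : Set (Vc n)) ∩ U).Nonempty → G ≤ H :=
    fun H hH hne => (hiffAll H hH).mp hne
  obtain ⟨δ, hδ, hball⟩ := Metric.isOpen_iff.mp hUopen p hpU
  set t : Vc n → ℝ := fun x => δ / (δ + ‖x - p‖) with ht_def
  have hden : ∀ x : Vc n, 0 < δ + ‖x - p‖ := fun x => by positivity
  have ht_pos : ∀ x, 0 < t x := fun x => div_pos hδ (hden x)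
  have ht_le : ∀ x, t x ≤ 1 := fun x => by
    rw [ht_def, div_le_one (hden x)]; linarith [norm_nonneg (x - p)]
  have ht_cont : Continuous t := continuous_const.div
    (continuous_const.add ((continuous_id.sub continuous_const).norm))
    (fun x => (hden x).ne')
  have hmemH : ∀ (Hp : AffineSubspace ℂ (Vc n)), p ∈ Hp → ∀ (x : Vc n), x ∉ Hp →
      ∀ c : ℝ, c ≠ 0 → p + c • (x - p) ∉ Hp := by
    intro Hp hp x hx c hc hmem
    apply hx
    have h1 : (p + c • (x - p)) -ᵥ p ∈ Hp.direction :=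
      AffineSubspace.vsub_mem_direction hmem hp
    have h2 : c • (x - p) ∈ Hp.direction := by
      simpa [vsub_eq_sub] using h1
    rw [← algebraMap_smul ℂ c (x - p)] at h2
    have hc' : (algebraMap ℝ ℂ c) ≠ 0 := by simpa using hc
    have h4 : (x - p) ∈ Hp.direction := by
      have h5 := Hp.direction.smul_mem (algebraMap ℝ ℂ c)⁻¹ h2
      rwa [inv_smul_smul₀ hc'] at h5
    have h6 := AffineSubspace.vadd_mem_of_mem_direction h4 hp
    simpa [vadd_eq_add, sub_add_cancel] using h6
  have key : ∀ (x : Vc n), x ∉ arrSing A → ∀ c : ℝ, c ≠ 0 →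
      (p + c • (x - p)) ∈ U → (p + c • (x - p)) ∈ U \ arrSing A := by
    intro x hx c hc hmem
    refine ⟨hmem, fun hsig => ?_⟩
    rw [arrSing, Set.mem_iUnion₂] at hsig
    obtain ⟨Hp, hHpA, hyH⟩ := hsig
    have hGH : G ≤ Hp := hiff Hp hHpA ⟨_, hyH, hmem⟩
    have hpH : p ∈ Hp := hGH hpG
    have hxH : x ∉ Hp := fun h => hx (Set.mem_biUnion hHpA h)
    exact hmemH Hp hpH x hxH c hc hyH
  have hlt : ∀ x : Vc n, ‖t x • (x - p)‖ < δ := by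
    intro x
    rw [norm_smul, Real.norm_eq_abs, abs_of_pos (ht_pos x), ht_def]
    rw [div_mul_eq_mul_div, div_lt_iff₀ (hden x)]
    nlinarith [norm_nonneg (x - p)]
  have hrU : ∀ x : Vc n, p + t x • (x - p) ∈ U := by
    intro x
    apply hball
    rw [Metric.mem_ball, dist_eq_norm]
    simpa [add_sub_cancel_left] using hlt x
  set rmap : C(↥(arrSing A)ᶜ, ↥(U \ arrSing A)) :=
    ⟨fun x => ⟨p + t x.1 • (x.1 - p), key x.1 x.2 (t x.1) (ht_pos x.1).ne' (hrU x.1)⟩, by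
      apply Continuous.subtype_mk
      exact continuous_const.add
        (((ht_cont.comp continuous_subtype_val)).smul
          (continuous_subtype_val.sub continuous_const))⟩ with hrmap
  have hmemHom : ∀ (q : unitInterval × ↥(U \ arrSing A)),
      p + ((1 - (q.1 : ℝ)) + (q.1 : ℝ) * t q.2.1) • (q.2.1 - p) ∈ U \ arrSing A := by
    rintro ⟨s, x⟩
    set lam : ℝ := (1 - (s : ℝ)) + (s : ℝ) * t x.1 with hlam
    have hs0 : (0:ℝ) ≤ s := s.2.1
    have hs1 : (s:ℝ) ≤ 1 := s.2.2
    have hlam_ge : t x.1 ≤ lam := by nlinarith [ht_pos x.1, ht_le x.1]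
    have hlam_pos : 0 < lam := lt_of_lt_of_le (ht_pos x.1) hlam_ge
    have hlam_le : lam ≤ 1 := by nlinarith [ht_le x.1]
    have hxU : x.1 ∈ U := x.2.1
    have hmemU : p + lam • (x.1 - p) ∈ U := by
      have hc := hUconv hpU hxU (by linarith : (0:ℝ) ≤ 1 - lam) hlam_pos.le (by ring)
      have heq : (1 - lam) • p + lam • x.1 = p + lam • (x.1 - p) := by module
      rwa [heq] at hc
    exact key x.1 x.2.2 lam hlam_pos.ne' hmemU
  set Htop : ContinuousMap.Homotopy (ContinuousMap.id ↥(U \ arrSing A))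
      (rmap.comp (smallIncl A U)) :=
    { toFun := fun q => ⟨p + ((1 - (q.1 : ℝ)) + (q.1 : ℝ) * t q.2.1) • (q.2.1 - p), hmemHom q⟩
      continuous_toFun := by
        apply Continuous.subtype_mk
        have hcs : Continuous fun q : unitInterval × ↥(U \ arrSing A) => (q.1 : ℝ) :=
          continuous_subtype_val.comp continuous_fst
        have hcx : Continuous fun q : unitInterval × ↥(U \ arrSing A) => (q.2 : Vc n) :=
          continuous_subtype_val.comp continuous_snd
        exact continuous_const.add
          (((continuous_const.sub hcs).add (hcs.mul (ht_cont.comp hcx))).smul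
            (hcx.sub continuous_const))
      map_zero_left := fun x => by
        apply Subtype.ext
        simp
      map_one_left := fun x => by
        apply Subtype.ext
        simp
        rfl } with hHtop
  obtain ⟨ρ, hρ⟩ := retract_aux12 (smallIncl A U) rmap Htop x₀
  refine ⟨?_, ρ, hρ⟩
  intro a b hab
  have ha := DFunLike.congr_fun hρ a
  have hb := DFunLike.congr_fun hρ b
  simp only [MonoidHom.comp_apply, MonoidHom.id_apply] at ha hb
  rw [← ha, ← hb, hab]
end
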